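/- Let n ≥ 2 and let B : V → End(V) be a linear map such that (X,Y,Z) ↦ Ω(B(X)Y,Z) is totally symmetric, encoding a translation-invariant symplectic connection on (ℝ^{2n},Ω). If this connection is of Ricci type, then B(X)∘B(Y) = 0 for all X,Y ∈ V; in particular its curvature R(X,Y) = B(X)∘B(Y) − B(Y)∘B(X) vanishes identically (the connection is flat) and its Ricci tensor r(X,Y) = Tr(B(X)∘B(Y)) is zero. -/

import Mathlib

noncomputable section

/-- The standard symplectic form `Ω(x,y) = Σ_{i=1}^{n} (x_i·y_{n+i} − x_{n+i}·y_i)`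
on `ℝ^{2n}`. -/
def Omega (n : ℕ) (x y : Fin (2*n) → ℝ) : ℝ :=
  ∑ i : Fin n, (x ⟨i.1, by have := i.isLt; omega⟩ * y ⟨n + i.1, by have := i.isLt; omega⟩
    - x ⟨n + i.1, by have := i.isLt; omega⟩ * y ⟨i.1, by have := i.isLt; omega⟩)

namespace RicciAux

/-- basis vectors -/
def bb (n : ℕ) (j : Fin (2*n)) : Fin (2*n) → ℝ := Pi.single j 1

/-- the symplectic pairing index -/
def sg (n : ℕ) (j : Fin (2*n)) : Fin (2*n) :=
  if h : (j:ℕ) < n then ⟨n + j, by have := j.isLt; omega⟩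
  else ⟨(j:ℕ) - n, by have := j.isLt; omega⟩

/-- sign -/
def ep (n : ℕ) (j : Fin (2*n)) : ℝ := if (j:ℕ) < n then 1 else -1

variable {n : ℕ}

lemma sg_lt (j : Fin (2*n)) (h : (j:ℕ) < n) :
    sg n j = ⟨n + j, by have := j.isLt; omega⟩ := dif_pos h

lemma sg_ge (j : Fin (2*n)) (h : n ≤ (j:ℕ)) :
    sg n j = ⟨(j:ℕ) - n, by have := j.isLt; omega⟩ := dif_neg (by omega)

lemma sg_sg (j : Fin (2*n)) : sg n (sg n j) = j := by
  have hj := j.isLt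
  rcases lt_or_ge (j:ℕ) n with h | h
  · rw [sg_lt j h, sg_ge _ (by simp), Fin.ext_iff]
    simp
  · rw [sg_ge j h, sg_lt _ (by simp; omega), Fin.ext_iff]
    simp; omega

lemma ep_sg (j : Fin (2*n)) : ep n (sg n j) = - ep n j := by
  have hj := j.isLt
  rcases lt_or_ge (j:ℕ) n with h | h
  · rw [sg_lt j h]
    simp [ep, h]
  · rw [sg_ge j h]
    have h2 : ¬ ((j:ℕ) < n) := by omega
    have h3 : ((j:ℕ) - n) < n := by omega
    simp [ep, h2, h3]

lemma ep_mul_self (j : Fin (2*n)) : ep n j * ep n j = 1 := by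
  unfold ep; split <;> norm_num

lemma ep_ne_zero (j : Fin (2*n)) : ep n j ≠ 0 := by
  unfold ep; split <;> norm_num

lemma omega_antisymm (x y : Fin (2*n) → ℝ) : Omega n x y = - Omega n y x := by
  unfold Omega
  rw [← Finset.sum_neg_distrib]
  exact Finset.sum_congr rfl fun i _ => by ring

lemma omega_add_left (x y z : Fin (2*n) → ℝ) :
    Omega n (x + y) z = Omega n x z + Omega n y z := by
  unfold Omega
  rw [← Finset.sum_add_distrib]
  exact Finset.sum_congr rfl fun i _ => by simp [Pi.add_apply]; ring

lemma omega_smul_left (a : ℝ) (x z : Fin (2*n) → ℝ) :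
    Omega n (a • x) z = a * Omega n x z := by
  unfold Omega
  rw [Finset.mul_sum]
  exact Finset.sum_congr rfl fun i _ => by simp [Pi.smul_apply]; ring

lemma omega_add_right (x y z : Fin (2*n) → ℝ) :
    Omega n x (y + z) = Omega n x y + Omega n x z := by
  unfold Omega
  rw [← Finset.sum_add_distrib]
  exact Finset.sum_congr rfl fun i _ => by simp [Pi.add_apply]; ring

lemma omega_smul_right (a : ℝ) (x z : Fin (2*n) → ℝ) :
    Omega n x (a • z) = a * Omega n x z := by
  unfold Omega
  rw [Finset.mul_sum]
  exact Finset.sum_congr rfl fun i _ => by simp [Pi.smul_apply]; ring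

lemma omega_neg_left (x z : Fin (2*n) → ℝ) : Omega n (-x) z = - Omega n x z := by
  have := omega_smul_left (n := n) (-1) x z; simpa using this

lemma omega_neg_right (x z : Fin (2*n) → ℝ) : Omega n x (-z) = - Omega n x z := by
  have := omega_smul_right (n := n) (-1) x z; simpa using this

lemma omega_sub_left (x y z : Fin (2*n) → ℝ) :
    Omega n (x - y) z = Omega n x z - Omega n y z := by
  rw [sub_eq_add_neg, omega_add_left, omega_neg_left]; ring

lemma omega_sub_right (x y z : Fin (2*n) → ℝ) :
    Omega n x (y - z) = Omega n x y - Omega n x z := by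
  rw [sub_eq_add_neg, omega_add_right, omega_neg_right]; ring

lemma omega_zero_left (z : Fin (2*n) → ℝ) : Omega n 0 z = 0 := by
  have := omega_smul_left (n := n) 0 0 z; simpa using this

lemma omega_zero_right (z : Fin (2*n) → ℝ) : Omega n z 0 = 0 := by
  rw [omega_antisymm, omega_zero_left]; ring

lemma omega_self (x : Fin (2*n) → ℝ) : Omega n x x = 0 := by
  have := omega_antisymm (n := n) x x; linarith

end RicciAux

namespace RicciAux

variable {n : ℕ}

lemma omega_bb_right (x : Fin (2*n) → ℝ) (j : Fin (2*n)) :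
    Omega n x (bb n j) = - ep n j * x (sg n j) := by
  have hj := j.isLt
  unfold Omega bb
  rcases lt_or_ge (j:ℕ) n with h | h
  · rw [sg_lt j h]
    rw [Finset.sum_eq_single ⟨(j:ℕ), h⟩]
    · have h1 : (⟨n + (j:ℕ), by omega⟩ : Fin (2*n)) ≠ j := by
        simp [Fin.ext_iff]; omega
      have h2 : (⟨(j:ℕ), by omega⟩ : Fin (2*n)) = j := by
        simp [Fin.ext_iff]
      rw [Pi.single_apply, Pi.single_apply, if_neg h1, if_pos h2]
      simp [ep, h]
    · intro b _ hb
      have hb' : (b:ℕ) ≠ (j:ℕ) := fun hh => hb (Fin.ext hh)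
      have h1 : (⟨(b:ℕ), by have := b.isLt; omega⟩ : Fin (2*n)) ≠ j := by
        simp [Fin.ext_iff]; omega
      have h2 : (⟨n + (b:ℕ), by have := b.isLt; omega⟩ : Fin (2*n)) ≠ j := by
        simp [Fin.ext_iff]; omega
      rw [Pi.single_apply, Pi.single_apply, if_neg h1, if_neg h2]
      ring
    · intro hmem; exact absurd (Finset.mem_univ _) hmem
  · rw [sg_ge j h]
    rw [Finset.sum_eq_single ⟨(j:ℕ) - n, by omega⟩]
    · have h1 : (⟨n + ((j:ℕ) - n), by omega⟩ : Fin (2*n)) = j := by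
        simp [Fin.ext_iff]; omega
      have h2 : (⟨(j:ℕ) - n, by omega⟩ : Fin (2*n)) ≠ j := by
        simp [Fin.ext_iff]; omega
      rw [Pi.single_apply, Pi.single_apply, if_pos h1, if_neg h2]
      have h3 : ¬ ((j:ℕ) < n) := by omega
      simp [ep, h3]
    · intro b _ hb
      have hb' : (b:ℕ) ≠ (j:ℕ) - n := fun hh => hb (Fin.ext hh)
      have h1 : (⟨(b:ℕ), by have := b.isLt; omega⟩ : Fin (2*n)) ≠ j := by
        simp [Fin.ext_iff]; omega
      have h2 : (⟨n + (b:ℕ), by have := b.isLt; omega⟩ : Fin (2*n)) ≠ j := by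
        simp [Fin.ext_iff]; omega
      rw [Pi.single_apply, Pi.single_apply, if_neg h1, if_neg h2]
      ring
    · intro hmem; exact absurd (Finset.mem_univ _) hmem

lemma omega_bb_left (y : Fin (2*n) → ℝ) (j : Fin (2*n)) :
    Omega n (bb n j) y = ep n j * y (sg n j) := by
  rw [omega_antisymm, omega_bb_right]; ring

lemma omega_nondeg (x : Fin (2*n) → ℝ) (h : ∀ y, Omega n x y = 0) : x = 0 := by
  funext j
  have h1 := h (bb n (sg n j))
  rw [omega_bb_right, sg_sg, ep_sg] at h1
  have h2 := ep_ne_zero (n := n) j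
  have : ep n j * x j = 0 := by linarith [h1]
  rcases mul_eq_zero.mp this with h3 | h3
  · exact absurd h3 h2
  · simpa using h3

end RicciAux

namespace RicciAux

variable {n : ℕ}

/-- bundled Omega -/
def omegaL (n : ℕ) : (Fin (2*n) → ℝ) →ₗ[ℝ] (Fin (2*n) → ℝ) →ₗ[ℝ] ℝ :=
  LinearMap.mk₂ ℝ (Omega n) omega_add_left
    (fun a x z => by rw [omega_smul_left]; rfl)
    omega_add_right
    (fun a x z => by rw [omega_smul_right]; rfl)

@[simp] lemma omegaL_apply (x y : Fin (2*n) → ℝ) : omegaL n x y = Omega n x y := rfl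

/-- reindexing sums by the involution sg -/
lemma sum_sg (g : Fin (2*n) → ℝ) : ∑ j, g (sg n j) = ∑ j, g j := by
  apply Finset.sum_nbij' (fun j => sg n j) (fun j => sg n j) <;>
    simp [sg_sg]

lemma sum_ep_symm (f : Fin (2*n) → Fin (2*n) → ℝ) (hf : ∀ j k, f j k = f k j) :
    ∑ j, ep n j * f j (sg n j) = 0 := by
  have h1 : ∑ j, ep n j * f j (sg n j)
      = ∑ j, ep n (sg n j) * f (sg n j) (sg n (sg n j)) := by
    rw [sum_sg (fun j => ep n j * f j (sg n j))]
  have h2 : ∑ j, ep n (sg n j) * f (sg n j) (sg n (sg n j))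
      = - ∑ j, ep n j * f j (sg n j) := by
    rw [← Finset.sum_neg_distrib]
    apply Finset.sum_congr rfl
    intro j _
    rw [ep_sg, sg_sg, hf]
    ring
  have := h1.trans h2
  linarith

/-- expansion of a linear functional over basis -/
lemma lin_expand (φ : (Fin (2*n) → ℝ) →ₗ[ℝ] ℝ) (x : Fin (2*n) → ℝ) :
    ∑ j, x j * φ (bb n j) = φ x := by
  have hx : x = ∑ j, x j • bb n j := by
    have := Finset.univ_sum_single x
    rw [← this]
    apply Finset.sum_congr rfl
    intro j _
    unfold bb
    rw [← Pi.single_smul]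
    simp
  conv_rhs => rw [hx]
  rw [map_sum]
  apply Finset.sum_congr rfl
  intro j _
  rw [map_smul]
  simp

lemma trace_eq_sum (C : Module.End ℝ (Fin (2*n) → ℝ)) :
    LinearMap.trace ℝ _ C = ∑ j, C (bb n j) j := by
  rw [LinearMap.trace_eq_matrix_trace ℝ (Pi.basisFun ℝ (Fin (2*n)))]
  unfold Matrix.trace
  apply Finset.sum_congr rfl
  intro j _
  rw [Matrix.diag_apply, LinearMap.toMatrix_apply]
  simp [bb]

lemma trace_formula (C : Module.End ℝ (Fin (2*n) → ℝ)) :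
    LinearMap.trace ℝ _ C = ∑ j, ep n j * Omega n (C (bb n j)) (bb n (sg n j)) := by
  rw [trace_eq_sum]
  apply Finset.sum_congr rfl
  intro j _
  rw [omega_bb_right, sg_sg, ep_sg]
  have h2 := ep_mul_self (n := n) j
  linear_combination (-(C (bb n j) j)) * h2

lemma trace_smulRight (φ : (Fin (2*n) → ℝ) →ₗ[ℝ] ℝ) (v : Fin (2*n) → ℝ) :
    LinearMap.trace ℝ _ (φ.smulRight v) = φ v := by
  rw [trace_eq_sum]
  rw [← lin_expand φ v]
  apply Finset.sum_congr rfl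
  intro j _
  rw [LinearMap.smulRight_apply]
  simp [mul_comm]

lemma comp_smulRight (C : Module.End ℝ (Fin (2*n) → ℝ)) (φ : (Fin (2*n) → ℝ) →ₗ[ℝ] ℝ)
    (v : Fin (2*n) → ℝ) : C * (φ.smulRight v) = φ.smulRight (C v) := by
  ext z
  simp [Module.End.mul_apply]

/-- contraction lemma (a): ∑ ep j ω(Z, b j) φ(b (sg j)) = -φ Z -/
lemma contract_a (φ : (Fin (2*n) → ℝ) →ₗ[ℝ] ℝ) (Z : Fin (2*n) → ℝ) :
    ∑ j, ep n j * (Omega n Z (bb n j) * φ (bb n (sg n j))) = - φ Z := by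
  have h1 : ∀ j, ep n j * (Omega n Z (bb n j) * φ (bb n (sg n j)))
      = - (Z (sg n j) * φ (bb n (sg n j))) := by
    intro j
    rw [omega_bb_right]
    have h2 := ep_mul_self (n := n) j
    linear_combination (- (Z (sg n j) * φ (bb n (sg n j)))) * h2
  rw [Finset.sum_congr rfl (fun j _ => h1 j)]
  have h3 : ∑ j, -(Z (sg n j) * φ (bb n (sg n j))) = ∑ j, -(Z j * φ (bb n j)) :=
    sum_sg (fun j => -(Z j * φ (bb n j)))
  rw [h3, Finset.sum_neg_distrib, lin_expand]

lemma contract_c : ∑ j, ep n j * Omega n (bb n j) (bb n (sg n j)) = 2*(n:ℝ) := by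
  have h1 : ∀ j : Fin (2*n), ep n j * Omega n (bb n j) (bb n (sg n j)) = 1 := by
    intro j
    rw [omega_bb_left]
    unfold bb
    rw [Pi.single_apply, if_pos rfl]
    have h2 := ep_mul_self (n := n) j
    linear_combination h2
  rw [Finset.sum_congr rfl (fun j _ => h1 j)]
  rw [Finset.sum_const]
  simp [Finset.card_univ, mul_comm]

end RicciAux

namespace RicciAux

variable {n : ℕ}

abbrev VV (n : ℕ) := Fin (2*n) → ℝ
abbrev EE (n : ℕ) := Module.End ℝ (Fin (2*n) → ℝ)

variable (B : VV n →ₗ[ℝ] EE n)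

/-- `r X` as a linear functional in the second argument -/
def rl (X : VV n) : VV n →ₗ[ℝ] ℝ :=
  (LinearMap.trace ℝ (VV n)).comp ((LinearMap.mulLeft ℝ (B X)).comp B)

/-- `r · Y` as a linear functional in the first argument -/
def rr (Y : VV n) : VV n →ₗ[ℝ] ℝ :=
  (LinearMap.trace ℝ (VV n)).comp ((LinearMap.mulRight ℝ (B Y)).comp B)

@[simp] lemma rl_apply (X Y : VV n) :
    rl B X Y = LinearMap.trace ℝ _ (B X * B Y) := rfl

@[simp] lemma rr_apply (X Y : VV n) :
    rr B Y X = LinearMap.trace ℝ _ (B X * B Y) := rfl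

/-- the Ricci endomorphism -/
def rho : EE n :=
  ∑ j, ((-(ep n j)) • (rl B (bb n (sg n j)))).smulRight (bb n j)

lemma omega_rho (X Y : VV n) :
    Omega n X (rho B Y) = LinearMap.trace ℝ _ (B X * B Y) := by
  unfold rho
  rw [LinearMap.sum_apply]
  have h0 : ∀ j : Fin (2*n),
      ((((-(ep n j)) • (rl B (bb n (sg n j)))).smulRight (bb n j)) Y : VV n)
      = ((-(ep n j)) * rl B (bb n (sg n j)) Y) • bb n j := by
    intro j
    rw [LinearMap.smulRight_apply]
    simp [smul_smul]
  have h1 : Omega n X (∑ j, (((-(ep n j)) • (rl B (bb n (sg n j)))).smulRight (bb n j)) Y)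
      = ∑ j, ((-(ep n j)) * rl B (bb n (sg n j)) Y) * Omega n X (bb n j) := by
    rw [show (∑ j, (((-(ep n j)) • (rl B (bb n (sg n j)))).smulRight (bb n j)) Y : VV n)
        = ∑ j, ((-(ep n j)) * rl B (bb n (sg n j)) Y) • bb n j from
      Finset.sum_congr rfl (fun j _ => h0 j)]
    rw [show Omega n X = omegaL n X from rfl]
    rw [map_sum]
    apply Finset.sum_congr rfl
    intro j _
    rw [map_smul]
    simp
  rw [h1]
  have h2 : ∀ j : Fin (2*n),
      ((-(ep n j)) * rl B (bb n (sg n j)) Y) * Omega n X (bb n j)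
      = X (sg n j) * rr B Y (bb n (sg n j)) := by
    intro j
    rw [omega_bb_right, rl_apply, rr_apply]
    have h3 := ep_mul_self (n := n) j
    linear_combination (X (sg n j) * LinearMap.trace ℝ _ (B (bb n (sg n j)) * B Y)) * h3
  rw [Finset.sum_congr rfl (fun j _ => h2 j)]
  rw [sum_sg (fun j => X j * rr B Y (bb n j))]
  rw [lin_expand (rr B Y) X]
  simp

lemma omega_rho_symm (X Y : VV n) : Omega n X (rho B Y) = Omega n Y (rho B X) := by
  rw [omega_rho, omega_rho, LinearMap.trace_mul_comm]

lemma rho_sp (x y : VV n) : Omega n (rho B x) y = - Omega n x (rho B y) := by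
  rw [omega_antisymm, omega_rho_symm]

end RicciAux

namespace RicciAux

variable {n : ℕ} (B : VV n →ₗ[ℝ] EE n)

lemma Bsym (h1 : ∀ X Y Z, Omega n (B X Y) Z = Omega n (B Y X) Z)
    (X Y : VV n) : B X Y = B Y X := by
  have key : ∀ T, Omega n (B X Y - B Y X) T = 0 := by
    intro T
    rw [omega_sub_left, h1]
    ring
  have := omega_nondeg _ key
  have h3 : B X Y - B Y X = 0 := this
  linear_combination (norm := module) h3

lemma sp_B (h2 : ∀ X Y Z, Omega n (B X Y) Z = Omega n (B X Z) Y)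
    (X u w : VV n) : Omega n u (B X w) = - Omega n (B X u) w := by
  rw [omega_antisymm, h2 X w u]

/-- the curvature model operator -/
def Mop (X Y : VV n) : EE n :=
  (-(2 * Omega n X Y)) • rho B
  + ((-(1:ℝ)) • (omegaL n X)).smulRight (rho B Y)
  + ((omegaL n Y).comp (rho B)).smulRight X
  + (omegaL n Y).smulRight (rho B X)
  + ((-(1:ℝ)) • ((omegaL n X).comp (rho B))).smulRight Y

lemma Mop_apply (X Y Z : VV n) : Mop B X Y Z =
    (-(2 * Omega n X Y)) • rho B Z + (-(Omega n X Z)) • rho B Y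
    + Omega n Y (rho B Z) • X + Omega n Y Z • rho B X
    + (-(Omega n X (rho B Z))) • Y := by
  simp only [Mop, LinearMap.add_apply, LinearMap.smul_apply, LinearMap.smulRight_apply,
    LinearMap.comp_apply, omegaL_apply, smul_smul, smul_eq_mul]
  module

variable (hR : ∀ X Y Z T,
      Omega n ((B X * B Y - B Y * B X) Z) T =
        -(1 / (2*((n:ℝ)+1))) *
          (2 * Omega n X Y * LinearMap.trace ℝ _ (B Z * B T)
           + Omega n X Z * LinearMap.trace ℝ _ (B Y * B T)
           + Omega n X T * LinearMap.trace ℝ _ (B Y * B Z)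
           - Omega n Y Z * LinearMap.trace ℝ _ (B X * B T)
           - Omega n Y T * LinearMap.trace ℝ _ (B X * B Z)))

include hR in
lemma comm_eq (X Y : VV n) :
    B X * B Y - B Y * B X = (-(1 / (2*((n:ℝ)+1)))) • Mop B X Y := by
  apply LinearMap.ext
  intro Z
  have key : ∀ T, Omega n ((B X * B Y - B Y * B X) Z
      - ((-(1 / (2*((n:ℝ)+1)))) • Mop B X Y) Z) T = 0 := by
    intro T
    rw [omega_sub_left, hR X Y Z T, LinearMap.smul_apply, omega_smul_left, Mop_apply]
    rw [omega_add_left, omega_add_left, omega_add_left, omega_add_left,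
        omega_smul_left, omega_smul_left, omega_smul_left, omega_smul_left, omega_smul_left]
    rw [← omega_rho B Z T, ← omega_rho B Y T, ← omega_rho B Y Z,
        ← omega_rho B X T, ← omega_rho B X Z]
    rw [rho_sp B Z T, rho_sp B Y T, rho_sp B X T]
    ring
  have h3 := omega_nondeg _ key
  have h4 := sub_eq_zero.mp h3
  exact h4

end RicciAux

namespace RicciAux

variable {n : ℕ} (B : VV n →ₗ[ℝ] EE n)

/-- tau as a bundled linear functional -/
def taul : VV n →ₗ[ℝ] ℝ :=
  (LinearMap.trace ℝ (VV n)).comp ((LinearMap.mulRight ℝ (rho B)).comp B)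

@[simp] lemma taul_apply (W : VV n) :
    taul B W = LinearMap.trace ℝ _ (B W * rho B) := rfl

lemma trace_BW_M (h2 : ∀ X Y Z, Omega n (B X Y) Z = Omega n (B X Z) Y)
    (W X Y : VV n) :
    LinearMap.trace ℝ _ (B W * Mop B X Y)
      = -(2 * Omega n X Y) * LinearMap.trace ℝ _ (B W * rho B)
        + 2 * Omega n (B W X) (rho B Y) - 2 * Omega n (B W Y) (rho B X) := by
  unfold Mop
  rw [mul_add, mul_add, mul_add, mul_add]
  rw [map_add, map_add, map_add, map_add]
  rw [mul_smul_comm, map_smul]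
  rw [comp_smulRight, comp_smulRight, comp_smulRight, comp_smulRight]
  rw [trace_smulRight, trace_smulRight, trace_smulRight, trace_smulRight]
  simp only [LinearMap.smul_apply, LinearMap.comp_apply, omegaL_apply, smul_eq_mul]
  rw [sp_B B h2 W X (rho B Y), sp_B B h2 W Y (rho B X)]
  rw [omega_rho_symm B Y (B W X), omega_rho_symm B X (B W Y)]
  ring

variable (hR : ∀ X Y Z T,
      Omega n ((B X * B Y - B Y * B X) Z) T =
        -(1 / (2*((n:ℝ)+1))) *
          (2 * Omega n X Y * LinearMap.trace ℝ _ (B Z * B T)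
           + Omega n X Z * LinearMap.trace ℝ _ (B Y * B T)
           + Omega n X T * LinearMap.trace ℝ _ (B Y * B Z)
           - Omega n Y Z * LinearMap.trace ℝ _ (B X * B T)
           - Omega n Y T * LinearMap.trace ℝ _ (B X * B Z)))

include hR in
lemma star_id (h2 : ∀ X Y Z, Omega n (B X Y) Z = Omega n (B X Z) Y)
    (X Y Z : VV n) :
    -(2 * Omega n X Y) * LinearMap.trace ℝ _ (B Z * rho B)
        + 2 * Omega n (B Z X) (rho B Y) - 2 * Omega n (B Z Y) (rho B X)
    = -(2 * Omega n Z X) * LinearMap.trace ℝ _ (B Y * rho B)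
        + 2 * Omega n (B Y Z) (rho B X) - 2 * Omega n (B Y X) (rho B Z) := by
  have hc : (-(1 / (2*((n:ℝ)+1)))) ≠ 0 := by
    have : (2*((n:ℝ)+1)) > 0 := by positivity
    simp only [ne_eq, neg_eq_zero, div_eq_zero_iff]
    push_neg
    constructor
    · norm_num
    · linarith
  have cyc : LinearMap.trace ℝ _ (B Z * (B X * B Y - B Y * B X))
      = LinearMap.trace ℝ _ ((B Z * B X - B X * B Z) * B Y) := by
    rw [mul_sub, sub_mul, map_sub, map_sub, ← mul_assoc]
    have e2 : LinearMap.trace ℝ (Fin (2*n) → ℝ) (B Z * (B Y * B X))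
        = LinearMap.trace ℝ (Fin (2*n) → ℝ) (B X * B Z * B Y) := by
      rw [LinearMap.trace_mul_comm ℝ (B Z) (B Y * B X), mul_assoc,
        LinearMap.trace_mul_comm ℝ (B Y) (B X * B Z)]
    rw [e2]
  rw [comm_eq B hR X Y, comm_eq B hR Z X] at cyc
  rw [mul_smul_comm, map_smul, smul_mul_assoc, map_smul] at cyc
  rw [LinearMap.trace_mul_comm ℝ (Mop B Z X) (B Y)] at cyc
  rw [smul_eq_mul, smul_eq_mul] at cyc
  have cyc2 := mul_left_cancel₀ hc cyc
  rw [trace_BW_M B h2 Z X Y, trace_BW_M B h2 Y Z X] at cyc2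
  exact cyc2

end RicciAux

namespace RicciAux

variable {n : ℕ} (B : VV n →ₗ[ℝ] EE n)

lemma contract_L2 (Z : VV n) :
    ∑ j, ep n j * Omega n (B Z (bb n j)) (rho B (bb n (sg n j)))
      = - LinearMap.trace ℝ _ (B Z * rho B) := by
  have h0 : ∀ j : Fin (2*n), ep n j * Omega n (B Z (bb n j)) (rho B (bb n (sg n j)))
      = - (ep n j * Omega n ((rho B * B Z) (bb n j)) (bb n (sg n j))) := by
    intro j
    have hsp := rho_sp B (B Z (bb n j)) (bb n (sg n j))
    rw [Module.End.mul_apply]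
    linear_combination (ep n j) * hsp
  rw [Finset.sum_congr rfl (fun j _ => h0 j), Finset.sum_neg_distrib]
  rw [← trace_formula (rho B * B Z), LinearMap.trace_mul_comm]

lemma contract_L3 (Z : VV n) :
    ∑ j, ep n j * Omega n (B Z (bb n (sg n j))) (rho B (bb n j))
      = LinearMap.trace ℝ _ (B Z * rho B) := by
  have h0 : ∀ j : Fin (2*n), ep n j * Omega n (B Z (bb n (sg n j))) (rho B (bb n j))
      = - ((fun k => ep n k * Omega n (B Z (bb n k)) (rho B (bb n (sg n k)))) (sg n j)) := by
    intro j
    simp only []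
    rw [ep_sg, sg_sg]
    ring
  rw [Finset.sum_congr rfl (fun j _ => h0 j), Finset.sum_neg_distrib]
  rw [sum_sg (fun k => ep n k * Omega n (B Z (bb n k)) (rho B (bb n (sg n k))))]
  rw [contract_L2]
  ring

lemma contract_L6 (h1 : ∀ X Y Z, Omega n (B X Y) Z = Omega n (B Y X) Z) (Z : VV n) :
    ∑ j, ep n j * Omega n (B (bb n (sg n j)) (bb n j)) (rho B Z) = 0 := by
  have hf : ∀ j k : Fin (2*n), Omega n (B (bb n j) (bb n k)) (rho B Z)
      = Omega n (B (bb n k) (bb n j)) (rho B Z) := fun j k => h1 _ _ _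
  have h0 : ∑ j, ep n j * Omega n (B (bb n (sg n j)) (bb n j)) (rho B Z)
      = ∑ j, ep n j * Omega n (B (bb n j) (bb n (sg n j))) (rho B Z) :=
    Finset.sum_congr rfl (fun j _ => by rw [h1])
  rw [h0]
  exact sum_ep_symm (fun a b => Omega n (B (bb n a) (bb n b)) (rho B Z)) hf

lemma tau_zero
    (h1 : ∀ X Y Z, Omega n (B X Y) Z = Omega n (B Y X) Z)
    (h2 : ∀ X Y Z, Omega n (B X Y) Z = Omega n (B X Z) Y)
    (hR : ∀ X Y Z T,
      Omega n ((B X * B Y - B Y * B X) Z) T =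
        -(1 / (2*((n:ℝ)+1))) *
          (2 * Omega n X Y * LinearMap.trace ℝ _ (B Z * B T)
           + Omega n X Z * LinearMap.trace ℝ _ (B Y * B T)
           + Omega n X T * LinearMap.trace ℝ _ (B Y * B Z)
           - Omega n Y Z * LinearMap.trace ℝ _ (B X * B T)
           - Omega n Y T * LinearMap.trace ℝ _ (B X * B Z)))
    (Z : VV n) : LinearMap.trace ℝ _ (B Z * rho B) = 0 := by
  set t := LinearMap.trace ℝ (Fin (2*n) → ℝ) (B Z * rho B) with ht
  have hsum : ∑ j, ep n j * (-(2 * Omega n (bb n j) (bb n (sg n j))) * t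
        + 2 * Omega n (B Z (bb n j)) (rho B (bb n (sg n j)))
        - 2 * Omega n (B Z (bb n (sg n j))) (rho B (bb n j)))
      = ∑ j, ep n j * (-(2 * Omega n Z (bb n j)) * LinearMap.trace ℝ _ (B (bb n (sg n j)) * rho B)
        + 2 * Omega n (B (bb n (sg n j)) Z) (rho B (bb n j))
        - 2 * Omega n (B (bb n (sg n j)) (bb n j)) (rho B Z)) := by
    apply Finset.sum_congr rfl
    intro j _
    rw [star_id B hR h2 (bb n j) (bb n (sg n j)) Z]
  -- decompose LHS
  have hL : ∀ j : Fin (2*n), ep n j * (-(2 * Omega n (bb n j) (bb n (sg n j))) * t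
        + 2 * Omega n (B Z (bb n j)) (rho B (bb n (sg n j)))
        - 2 * Omega n (B Z (bb n (sg n j))) (rho B (bb n j)))
      = (-2*t) * (ep n j * Omega n (bb n j) (bb n (sg n j)))
        + 2 * (ep n j * Omega n (B Z (bb n j)) (rho B (bb n (sg n j))))
        + (-2) * (ep n j * Omega n (B Z (bb n (sg n j))) (rho B (bb n j))) := by
    intro j; ring
  have hRd : ∀ j : Fin (2*n), ep n j * (-(2 * Omega n Z (bb n j)) * LinearMap.trace ℝ _ (B (bb n (sg n j)) * rho B)
        + 2 * Omega n (B (bb n (sg n j)) Z) (rho B (bb n j))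
        - 2 * Omega n (B (bb n (sg n j)) (bb n j)) (rho B Z))
      = (-2) * (ep n j * (Omega n Z (bb n j) * taul B (bb n (sg n j))))
        + 2 * (ep n j * Omega n (B Z (bb n (sg n j))) (rho B (bb n j)))
        + (-2) * (ep n j * Omega n (B (bb n (sg n j)) (bb n j)) (rho B Z)) := by
    intro j
    rw [taul_apply, Bsym B h1 (bb n (sg n j)) Z]
    ring
  rw [Finset.sum_congr rfl (fun j _ => hL j)] at hsum
  rw [Finset.sum_congr rfl (fun j _ => hRd j)] at hsum
  rw [Finset.sum_add_distrib, Finset.sum_add_distrib, ← Finset.mul_sum, ← Finset.mul_sum,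
    ← Finset.mul_sum] at hsum
  rw [Finset.sum_add_distrib, Finset.sum_add_distrib, ← Finset.mul_sum, ← Finset.mul_sum,
    ← Finset.mul_sum] at hsum
  rw [contract_c, contract_L2, contract_L3, contract_a (taul B) Z,
    contract_L6 B h1] at hsum
  rw [taul_apply, ← ht] at hsum
  have hn0 : (0:ℝ) < 4*(n:ℝ) + 8 := by positivity
  have h9 : (4*(n:ℝ)+8) * t = 0 := by linear_combination -hsum
  rcases mul_eq_zero.mp h9 with h | h
  · exact absurd h (by linarith)
  · exact h

end RicciAux

namespace RicciAux

variable {n : ℕ} (B : VV n →ₗ[ℝ] EE n)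

section Conditional

variable (h1 : ∀ X Y Z, Omega n (B X Y) Z = Omega n (B Y X) Z)
variable (h2 : ∀ X Y Z, Omega n (B X Y) Z = Omega n (B X Z) Y)
variable (hR : ∀ X Y Z T,
      Omega n ((B X * B Y - B Y * B X) Z) T =
        -(1 / (2*((n:ℝ)+1))) *
          (2 * Omega n X Y * LinearMap.trace ℝ _ (B Z * B T)
           + Omega n X Z * LinearMap.trace ℝ _ (B Y * B T)
           + Omega n X T * LinearMap.trace ℝ _ (B Y * B Z)
           - Omega n Y Z * LinearMap.trace ℝ _ (B X * B T)
           - Omega n Y T * LinearMap.trace ℝ _ (B X * B Z)))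

include h1 h2 hR

lemma H_sym23 (X Y Z : VV n) :
    Omega n (B X Y) (rho B Z) = Omega n (B X Z) (rho B Y) := by
  have st1 := star_id B hR h2 X Y Z
  have st2 := star_id B hR h2 Z X Y
  rw [tau_zero B h1 h2 hR Z, tau_zero B h1 h2 hR Y] at st1
  rw [tau_zero B h1 h2 hR Y, tau_zero B h1 h2 hR X] at st2
  rw [h1 Z X (rho B Y), h1 Z Y (rho B X), h1 Y X (rho B Z)] at st1
  rw [h1 Y X (rho B Z)] at st2
  linarith [st1, st2]

lemma rho_B_anti (X v : VV n) : rho B (B X v) = - B X (rho B v) := by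
  have key : ∀ w, Omega n (rho B (B X v) + B X (rho B v)) w = 0 := by
    intro w
    rw [omega_add_left]
    rw [rho_sp B (B X v) w]
    have e1 : Omega n (B X (rho B v)) w = Omega n (B X w) (rho B v) := h2 X (rho B v) w
    have e2 : Omega n (B X w) (rho B v) = Omega n (B X v) (rho B w) := H_sym23 B h1 h2 hR X w v
    rw [e1, e2]
    ring
  have h3 := omega_nondeg _ key
  linear_combination (norm := module) h3

lemma Brho_swap (X Z : VV n) : B X (rho B Z) = B Z (rho B X) := by
  have a1 := rho_B_anti B h1 h2 hR X Z
  have a2 := rho_B_anti B h1 h2 hR Z X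
  have h3 : rho B (B X Z) = rho B (B Z X) := by rw [Bsym B h1 X Z]
  linear_combination (norm := module) a1 - a2 - h3

lemma cyc3 (X Y Z W : VV n) :
    (Omega n Y Z) • B X (rho B W) + (Omega n Z X) • B Y (rho B W)
      + (Omega n X Y) • B Z (rho B W) = 0 := by
  have jac : B X ((B Y * B Z - B Z * B Y) W) - (B Y * B Z - B Z * B Y) (B X W)
      + (B Y ((B Z * B X - B X * B Z) W) - (B Z * B X - B X * B Z) (B Y W))
      + (B Z ((B X * B Y - B Y * B X) W) - (B X * B Y - B Y * B X) (B Z W)) = 0 := by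
    simp only [LinearMap.sub_apply, Module.End.mul_apply, map_sub]
    abel
  rw [comm_eq B hR Y Z, comm_eq B hR Z X, comm_eq B hR X Y] at jac
  simp only [LinearMap.smul_apply, map_smul] at jac
  set c : ℝ := -(1 / (2*((n:ℝ)+1))) with hcdef
  have hc : c ≠ 0 := by
    have : (2*((n:ℝ)+1)) > 0 := by positivity
    rw [hcdef]
    simp only [ne_eq, neg_eq_zero, div_eq_zero_iff]
    push_neg
    exact ⟨by norm_num, by linarith⟩
  have jac2 : c • (B X (Mop B Y Z W) - Mop B Y Z (B X W)
      + (B Y (Mop B Z X W) - Mop B Z X (B Y W))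
      + (B Z (Mop B X Y W) - Mop B X Y (B Z W))) = 0 := by
    rw [smul_add, smul_add, smul_sub, smul_sub, smul_sub]
    exact jac
  have big0 : B X (Mop B Y Z W) - Mop B Y Z (B X W)
      + (B Y (Mop B Z X W) - Mop B Z X (B Y W))
      + (B Z (Mop B X Y W) - Mop B X Y (B Z W)) = 0 := by
    rcases smul_eq_zero.mp jac2 with h | h
    · exact absurd h hc
    · exact h
  simp only [Mop_apply, map_add, map_smul, map_neg, smul_neg, neg_smul,
    omega_neg_right, rho_B_anti B h1 h2 hR, sp_B B h2] at big0
  rw [Bsym B h1 Y X, Bsym B h1 Z Y, Bsym B h1 X Z] at big0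
  rw [Brho_swap B h1 h2 hR Y X, Brho_swap B h1 h2 hR Z Y, Brho_swap B h1 h2 hR X Z] at big0
  have key : (-4:ℝ) • ((Omega n Y Z) • B X (rho B W) + (Omega n Z X) • B Y (rho B W)
      + (Omega n X Y) • B Z (rho B W)) = 0 := by
    linear_combination (norm := module) big0
  rcases smul_eq_zero.mp key with h | h
  · norm_num at h
  · exact h

end Conditional

end RicciAux

namespace RicciAux

variable {n : ℕ}

lemma omega_nondeg_right (u : VV n) (h : ∀ a, Omega n a u = 0) : u = 0 := by
  apply omega_nondeg
  intro y
  rw [omega_antisymm, h y]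
  ring

lemma exists_omega_ne (v : VV n) (hv : v ≠ 0) : ∃ u, Omega n v u ≠ 0 := by
  by_contra h
  push_neg at h
  exact hv (omega_nondeg v h)

lemma exists_ker2 (hn : 2 ≤ n) (φ ψ : VV n →ₗ[ℝ] ℝ) :
    ∃ z : VV n, z ≠ 0 ∧ φ z = 0 ∧ ψ z = 0 := by
  by_contra h
  push_neg at h
  have hker : LinearMap.ker (φ.prod ψ) = ⊥ := by
    rw [Submodule.eq_bot_iff]
    intro z hz
    rw [LinearMap.mem_ker, LinearMap.prod_apply, Function.prod] at hz
    by_contra h0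
    have hφ : φ z = 0 := congrArg Prod.fst hz
    have hψ : ψ z = 0 := congrArg Prod.snd hz
    exact (h z h0 hφ) hψ
  have hinj : Function.Injective (φ.prod ψ) := LinearMap.ker_eq_bot.mp hker
  have hle := LinearMap.finrank_le_finrank_of_injective hinj
  rw [Module.finrank_fintype_fun_eq_card] at hle
  have h2 : Module.finrank ℝ (ℝ × ℝ) = 2 := by
    simp [Module.finrank_prod]
  rw [h2, Fintype.card_fin] at hle
  omega

lemma exists_perp_pair (hn : 2 ≤ n) (X : VV n) (hX : X ≠ 0) :
    ∃ Y Z : VV n, Omega n X Y = 0 ∧ Omega n X Z = 0 ∧ Omega n Y Z ≠ 0 := by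
  obtain ⟨u0, hu0⟩ := exists_omega_ne X hX
  set W1 : VV n := (Omega n X u0)⁻¹ • u0 with hW1def
  have hW1 : Omega n X W1 = 1 := by
    rw [hW1def, omega_smul_right]
    field_simp
  obtain ⟨z, hz0, hz1, hz2⟩ := exists_ker2 hn (omegaL n X) (omegaL n W1)
  rw [omegaL_apply] at hz1 hz2
  obtain ⟨u, hu⟩ := exists_omega_ne z hz0
  refine ⟨z, u - (Omega n X u) • W1, hz1, ?_, ?_⟩
  · rw [omega_sub_right, omega_smul_right, hW1]
    ring
  · rw [omega_sub_right, omega_smul_right]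
    have hzw : Omega n z W1 = 0 := by
      rw [omega_antisymm, hz2]
      ring
    rw [hzw]
    simpa using hu

section Endgame

variable (B : VV n →ₗ[ℝ] EE n)
variable (h1 : ∀ X Y Z, Omega n (B X Y) Z = Omega n (B Y X) Z)
variable (h2 : ∀ X Y Z, Omega n (B X Y) Z = Omega n (B X Z) Y)
variable (hR : ∀ X Y Z T,
      Omega n ((B X * B Y - B Y * B X) Z) T =
        -(1 / (2*((n:ℝ)+1))) *
          (2 * Omega n X Y * LinearMap.trace ℝ _ (B Z * B T)
           + Omega n X Z * LinearMap.trace ℝ _ (B Y * B T)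
           + Omega n X T * LinearMap.trace ℝ _ (B Y * B Z)
           - Omega n Y Z * LinearMap.trace ℝ _ (B X * B T)
           - Omega n Y T * LinearMap.trace ℝ _ (B X * B Z)))

include h1 h2 hR

lemma B_rho_zero (hn : 2 ≤ n) (X W : VV n) : B X (rho B W) = 0 := by
  rcases eq_or_ne X 0 with h0 | h0
  · rw [h0]
    simp
  obtain ⟨Y, Z, ha, hb, hc⟩ := exists_perp_pair hn X h0
  have key := cyc3 B h1 h2 hR X Y Z W
  have hzx : Omega n Z X = 0 := by
    rw [omega_antisymm, hb]; ring
  rw [ha, hzx] at key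
  simp only [zero_smul, add_zero] at key
  rcases smul_eq_zero.mp key with h | h
  · exact absurd h hc
  · exact h

lemma rho_zero (hn : 2 ≤ n) (W0 : VV n) : rho B W0 = 0 := by
  by_contra hv
  set v : VV n := rho B W0 with hvdef
  set c : ℝ := -(1 / (2*((n:ℝ)+1))) with hcdef
  have hc : c ≠ 0 := by
    have : (2*((n:ℝ)+1)) > 0 := by positivity
    rw [hcdef]
    simp only [ne_eq, neg_eq_zero, div_eq_zero_iff]
    push_neg
    exact ⟨by norm_num, by linarith⟩
  -- B kills v
  have hBv : ∀ u, B u v = 0 := fun u => B_rho_zero B h1 h2 hR hn u W0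
  have hBv' : ∀ w, B v w = 0 := fun w => by rw [Bsym B h1 v w]; exact hBv w
  -- rho v = 0
  have hrv : rho B v = 0 := by
    apply omega_nondeg_right
    intro a
    rw [omega_rho]
    have : B a * B v = 0 := by
      apply LinearMap.ext
      intro w
      simp [Module.End.mul_apply, hBv']
    rw [this, map_zero]
  -- relation E'
  have hE : ∀ X Y : VV n, (Omega n X v) • rho B Y = (Omega n Y v) • rho B X := by
    intro X Y
    have hcm := LinearMap.ext_iff.mp (comm_eq B hR X Y) v
    rw [LinearMap.sub_apply, Module.End.mul_apply, Module.End.mul_apply] at hcm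
    rw [hBv X, hBv Y, map_zero, map_zero, LinearMap.smul_apply, Mop_apply] at hcm
    rw [hrv] at hcm
    simp only [omega_zero_right, smul_zero, zero_smul, add_zero, zero_add, sub_zero,
      neg_zero] at hcm
    have hcm2 : (0:VV n) = c • ((-(Omega n X v)) • rho B Y + Omega n Y v • rho B X) := by
      rw [hcdef]
      exact hcm
    have hcm3 : (-(Omega n X v)) • rho B Y + Omega n Y v • rho B X = 0 := by
      rcases smul_eq_zero.mp hcm2.symm with h | h
      · exact absurd h hc
      · exact h
    linear_combination (norm := module) -hcm3
  -- lambda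
  set lam : ℝ := Omega n W0 v with hlamdef
  have hlam : ∀ X, (Omega n X v) • v = lam • rho B X := fun X => hE X W0
  have hlne : lam ≠ 0 := by
    intro h0
    obtain ⟨u, hu⟩ := exists_omega_ne v hv
    have huv : Omega n u v ≠ 0 := by
      rw [omega_antisymm]
      simpa using hu
    have := hlam u
    rw [h0, zero_smul] at this
    rcases smul_eq_zero.mp this with h | h
    · exact huv h
    · exact hv h
  -- hRicci at (v, W0, W0, W0)
  have hr := hR v W0 W0 W0
  have hL : (B v * B W0 - B W0 * B v) W0 = 0 := by
    rw [LinearMap.sub_apply, Module.End.mul_apply, Module.End.mul_apply, hBv' W0, hBv' (B W0 W0)]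
    simp
  rw [hL, omega_zero_left] at hr
  have htr : LinearMap.trace ℝ _ (B W0 * B W0) = lam := by
    rw [hlamdef, hvdef, omega_rho]
  rw [htr, omega_self] at hr
  have hvw : Omega n v W0 = - lam := by
    rw [omega_antisymm, hlamdef]
  rw [hvw] at hr
  have hfin : c * (4 * lam * lam) = 0 := by linear_combination hr
  rcases mul_eq_zero.mp hfin with h | h
  · exact absurd h hc
  · have : lam = 0 := by nlinarith [h]
    exact hlne this

end Endgame

end RicciAux

namespace RicciAux

variable {n : ℕ}

section Final

variable (B : VV n →ₗ[ℝ] EE n)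
variable (h1 : ∀ X Y Z, Omega n (B X Y) Z = Omega n (B Y X) Z)
variable (h2 : ∀ X Y Z, Omega n (B X Y) Z = Omega n (B X Z) Y)
variable (hR : ∀ X Y Z T,
      Omega n ((B X * B Y - B Y * B X) Z) T =
        -(1 / (2*((n:ℝ)+1))) *
          (2 * Omega n X Y * LinearMap.trace ℝ _ (B Z * B T)
           + Omega n X Z * LinearMap.trace ℝ _ (B Y * B T)
           + Omega n X T * LinearMap.trace ℝ _ (B Y * B Z)
           - Omega n Y Z * LinearMap.trace ℝ _ (B X * B T)
           - Omega n Y T * LinearMap.trace ℝ _ (B X * B Z)))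

include h1 h2 hR

lemma r_zero (hn : 2 ≤ n) (X Y : VV n) : LinearMap.trace ℝ _ (B X * B Y) = 0 := by
  rw [← omega_rho B X Y, rho_zero B h1 h2 hR hn Y, omega_zero_right]

lemma comm_zero (hn : 2 ≤ n) (X Y : VV n) : B X * B Y - B Y * B X = 0 := by
  rw [comm_eq B hR X Y]
  have hM : Mop B X Y = 0 := by
    apply LinearMap.ext
    intro Z
    rw [Mop_apply]
    simp [rho_zero B h1 h2 hR hn, omega_zero_right]
  rw [hM, smul_zero]

lemma BB_zero (hn : 2 ≤ n) (X Y : VV n) : B X * B Y = 0 := by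
  have hq12 : ∀ a b z : VV n, B a (B b z) = B b (B a z) := by
    intro a b z
    have := LinearMap.ext_iff.mp (comm_zero B h1 h2 hR hn a b) z
    rw [LinearMap.sub_apply, Module.End.mul_apply, Module.End.mul_apply, LinearMap.zero_apply,
      sub_eq_zero] at this
    exact this
  have e14 : ∀ a u t : VV n, Omega n (B a u) t = Omega n (B t u) a := by
    intro a u t
    rw [h2 a u t, h1 a t u, h2 t a u]
  apply LinearMap.ext
  intro Z
  rw [Module.End.mul_apply, LinearMap.zero_apply]
  apply omega_nondeg
  intro T
  -- permutation chain
  have s1 : Omega n (B X (B Y Z)) T = Omega n (B X (B Z Y)) T := by rw [Bsym B h1 Y Z]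
  have s2 : Omega n (B X (B Z Y)) T = Omega n (B Z (B X Y)) T := by rw [hq12 X Z Y]
  have s3 : Omega n (B Z (B X Y)) T = Omega n (B Z (B Y X)) T := by rw [Bsym B h1 X Y]
  have s4 : Omega n (B Z (B Y X)) T = Omega n (B T (B Y X)) Z := e14 Z (B Y X) T
  have s5 : Omega n (B T (B Y X)) Z = Omega n (B Y (B T X)) Z := by rw [hq12 T Y X]
  have s6 : Omega n (B Y (B T X)) Z = Omega n (B Y (B X T)) Z := by rw [Bsym B h1 T X]
  -- antisymmetry step
  have a1 : Omega n (B X T) (B Y Z) = - Omega n (B Y (B X T)) Z := sp_B B h2 Y (B X T) Z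
  have a2 : Omega n T (B X (B Y Z)) = - Omega n (B X T) (B Y Z) := sp_B B h2 X T (B Y Z)
  have a3 : Omega n T (B X (B Y Z)) = - Omega n (B X (B Y Z)) T := by
    rw [omega_antisymm]
  linarith [s1, s2, s3, s4, s5, s6, a1, a2, a3]

end Final

end RicciAux


/-- A translation-invariant symplectic connection of Ricci type on
`(ℝ^{2n}, Ω)`, `n ≥ 2`, encoded by a linear map `B : V → End(V)` with
`Ω(B(X)Y,Z)` totally symmetric, satisfies `B(X)∘B(Y) = 0`; in particular its
curvature `R(X,Y) = B(X)∘B(Y) − B(Y)∘B(X)` vanishes (the connection is flat) and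
its Ricci tensor `r(X,Y) = Tr(B(X)∘B(Y))` is zero. -/
theorem invariant_ricci_type_is_flat (n : ℕ) (hn : 2 ≤ n)
    (B : (Fin (2*n) → ℝ) →ₗ[ℝ] Module.End ℝ (Fin (2*n) → ℝ))
    (hsym₁ : ∀ X Y Z, Omega n (B X Y) Z = Omega n (B Y X) Z)
    (hsym₂ : ∀ X Y Z, Omega n (B X Y) Z = Omega n (B X Z) Y)
    (hRicci : ∀ X Y Z T,
      Omega n ((B X * B Y - B Y * B X) Z) T =
        -(1 / (2*((n:ℝ)+1))) *
          (2 * Omega n X Y * LinearMap.trace ℝ _ (B Z * B T)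
           + Omega n X Z * LinearMap.trace ℝ _ (B Y * B T)
           + Omega n X T * LinearMap.trace ℝ _ (B Y * B Z)
           - Omega n Y Z * LinearMap.trace ℝ _ (B X * B T)
           - Omega n Y T * LinearMap.trace ℝ _ (B X * B Z))) :
    (∀ X Y, B X * B Y = 0) ∧
    (∀ X Y, B X * B Y - B Y * B X = 0) ∧
    (∀ X Y, LinearMap.trace ℝ _ (B X * B Y) = 0) := by
  exact ⟨fun X Y => RicciAux.BB_zero B hsym₁ hsym₂ hRicci hn X Y,
    fun X Y => RicciAux.comm_zero B hsym₁ hsym₂ hRicci hn X Y,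
    fun X Y => RicciAux.r_zero B hsym₁ hsym₂ hRicci hn X Y⟩
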